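/- Let G be a finite bipartite simple graph with bipartition (A, B), and let M[G] be its fundamental transversal matroid. Let λ be a positive integer and let (U, V) be a partition of A ∪ B with λ_{M[G]}(U) ≤ λ. Then the equivalence relation ∼_U on the subsets of U has at most 2^{2^{2^λ}} + 1 equivalence classes. (Hence the class of fundamental transversal matroids is strongly pigeonhole.) -/
import Mathlib


open Set

noncomputable def mrank {α : Type*} (M : Matroid α) (X : Set α) : ℕ :=
  sSup {n | ∃ I, I ⊆ X ∧ M.Indep I ∧ I.ncard = n}

noncomputable def connVal {α : Type*} (M : Matroid α) (U : Set α) : ℕ :=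
  mrank M U + mrank M (M.E \ U) - mrank M M.E

def Sim {α : Type*} (M : Matroid α) (U X X' : Set α) : Prop :=
  ∀ Z ⊆ M.E \ U, (M.Indep (X ∪ Z) ↔ M.Indep (X' ∪ Z))

def SimClassesLE {α : Type*} (M : Matroid α) (U : Set α) (k : ℕ) : Prop :=
  ∃ f : Set α → Fin k, ∀ X X' : Set α, X ⊆ U → X' ⊆ U → f X = f X' → Sim M U X X'

structure Decomp {α : Type*} (M : Matroid α) where
  V : Type
  fin : Finite V
  T : SimpleGraph V
  conn : T.Connected
  acyc : T.IsAcyclic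
  deg : ∀ v : V, (T.neighborSet v).ncard = 1 ∨ (T.neighborSet v).ncard = 3
  leafEquiv : M.E ≃ {v : V // (T.neighborSet v).ncard = 1}

def Decomp.Displays {α : Type*} {M : Matroid α} (D : Decomp M) (U : Set α) : Prop :=
  ∃ u v : D.V, D.T.Adj u v ∧
    U = {x | ∃ h : x ∈ M.E, (D.T.deleteEdges {s(u, v)}).Reachable (D.leafEquiv ⟨x, h⟩).1 u}

def bwLE {α : Type*} (M : Matroid α) (k : ℕ) : Prop :=
  ∃ D : Decomp M, ∀ U, D.Displays U → connVal M U + 1 ≤ k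

def dwLE {α : Type*} (M : Matroid α) (k : ℕ) : Prop :=
  ∃ D : Decomp M, ∀ U, D.Displays U → SimClassesLE M U k

def Pigeonhole {α : Type*} (C : Set (Matroid α)) : Prop :=
  ∀ l : ℕ, 0 < l → ∃ ρ : ℕ, ∀ M ∈ C, bwLE M l → dwLE M ρ

/-- A matching of a graph: a set of edges, pairwise sharing no vertex. -/
def IsGraphMatching {α : Type*} (G : SimpleGraph α) (m : Set (Sym2 α)) : Prop :=
  m ⊆ G.edgeSet ∧ m.Pairwise fun e f => ∀ x, x ∈ e → x ∉ f

/-- A matching \`m\` certifies the independence of \`X\` in the fundamental transversal matroid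
of the bipartite graph \`G\` with bipartition \`(A, B)\`: \`|m| = |X ∩ A|\` and every edge of
\`m\` joins a vertex of \`X ∩ A\` to a vertex of \`B \ X\`. -/
def CertifiesIndep {α : Type*} (G : SimpleGraph α) (A B X : Set α) (m : Set (Sym2 α)) : Prop :=
  IsGraphMatching G m ∧ m.Finite ∧ m.ncard = (X ∩ A).ncard ∧
    ∀ e ∈ m, ∃ a b, a ∈ X ∩ A ∧ b ∈ B \ X ∧ e = s(a, b)

/-! ### Auxiliary machinery -/

set_option linter.unusedSectionVars false
set_option linter.unusedVariables false

section Helpers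
variable {α : Type*} [Nonempty α]

open Classical in
/-- Pick the endpoint of an edge lying in `S` (if any). -/
noncomputable def epick (S : Set α) (e : Sym2 α) : α :=
  if h : ∃ a ∈ S, a ∈ e then h.choose else Classical.arbitrary α

lemma epick_spec {S : Set α} {e : Sym2 α} (h : ∃ a ∈ S, a ∈ e) :
    epick S e ∈ S ∧ epick S e ∈ e := by
  rw [epick, dif_pos h]
  exact ⟨h.choose_spec.1, h.choose_spec.2⟩

lemma epick_eq {S T : Set α} (hST : ∀ x ∈ S, x ∉ T) {a b : α}
    (ha : a ∈ S) (hb : b ∈ T) : epick S s(a, b) = a := by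
  have h : ∃ x ∈ S, x ∈ s(a, b) := ⟨a, ha, by simp⟩
  obtain ⟨h1, h2⟩ := epick_spec h
  rw [Sym2.mem_iff] at h2
  rcases h2 with h2 | h2
  · exact h2
  · exact absurd hb (h2 ▸ hST _ h1)

lemma matching_injOn {m : Set (Sym2 α)}
    (hm : m.Pairwise fun e f => ∀ x, x ∈ e → x ∉ f)
    {S : Set α} (hmem : ∀ e ∈ m, epick S e ∈ e) : Set.InjOn (epick S) m := by
  intro e he f hf hef
  by_contra hne
  exact hm he hf hne _ (hmem e he) (hef ▸ hmem f hf)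

/-- In a matching whose edges each join `S` to `T` (disjoint), the `S`-endpoint map is
well-defined. -/
lemma matching_epick_mem {m : Set (Sym2 α)} {S T : Set α}
    (hST : ∀ x ∈ S, x ∉ T)
    (hform : ∀ e ∈ m, ∃ a b, a ∈ S ∧ b ∈ T ∧ e = s(a, b)) :
    ∀ e ∈ m, epick S e ∈ S ∧ epick S e ∈ e ∧
      ∀ a b, a ∈ S → b ∈ T → e = s(a, b) → epick S e = a := by
  intro e he
  obtain ⟨a, b, ha, hb, rfl⟩ := hform e he
  have h1 := epick_eq hST ha hb
  refine ⟨by rw [h1]; exact ha, by rw [h1]; simp, ?_⟩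
  intro a' b' ha' hb' hee
  rw [hee] at h1 ⊢
  exact epick_eq hST ha' hb'

lemma matching_finite {m : Set (Sym2 α)} {S T : Set α}
    (hm : m.Pairwise fun e f => ∀ x, x ∈ e → x ∉ f)
    (hST : ∀ x ∈ S, x ∉ T) (hSfin : S.Finite)
    (hform : ∀ e ∈ m, ∃ a b, a ∈ S ∧ b ∈ T ∧ e = s(a, b)) : m.Finite := by
  have hmem := matching_epick_mem hST hform
  have hinj : Set.InjOn (epick S) m := matching_injOn hm fun e he => (hmem e he).2.1
  have himg : epick S '' m ⊆ S := by
    rintro x ⟨e, he, rfl⟩; exact (hmem e he).1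
  exact Set.Finite.of_finite_image (hSfin.subset himg) hinj

lemma matching_ncard_le {m : Set (Sym2 α)} {S T : Set α}
    (hm : m.Pairwise fun e f => ∀ x, x ∈ e → x ∉ f)
    (hST : ∀ x ∈ S, x ∉ T) (hSfin : S.Finite)
    (hform : ∀ e ∈ m, ∃ a b, a ∈ S ∧ b ∈ T ∧ e = s(a, b)) : m.ncard ≤ S.ncard := by
  have hmem := matching_epick_mem hST hform
  have hinj : Set.InjOn (epick S) m := matching_injOn hm fun e he => (hmem e he).2.1
  have himg : epick S '' m ⊆ S := by
    rintro x ⟨e, he, rfl⟩; exact (hmem e he).1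
  calc m.ncard = (epick S '' m).ncard :=
        (Set.ncard_image_of_injOn hinj).symm
    _ ≤ S.ncard := Set.ncard_le_ncard himg hSfin

lemma matching_image_eq {m : Set (Sym2 α)} {S T : Set α}
    (hm : m.Pairwise fun e f => ∀ x, x ∈ e → x ∉ f)
    (hST : ∀ x ∈ S, x ∉ T)
    (hform : ∀ e ∈ m, ∃ a b, a ∈ S ∧ b ∈ T ∧ e = s(a, b))
    (hcov : ∀ a ∈ S, ∃ e ∈ m, a ∈ e) : epick S '' m = S := by
  have hmem := matching_epick_mem hST hform
  apply Set.Subset.antisymm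
  · rintro x ⟨e, he, rfl⟩; exact (hmem e he).1
  · intro a ha
    obtain ⟨e, he, hae⟩ := hcov a ha
    obtain ⟨a', b', ha', hb', rfl⟩ := hform e he
    have : a = a' := by
      rw [Sym2.mem_iff] at hae
      rcases hae with rfl | rfl
      · rfl
      · exact absurd hb' (hST _ ha)
    exact ⟨s(a', b'), he, by rw [(hmem _ he).2.2 a' b' ha' hb' rfl, this]⟩

lemma matching_ncard_eq {m : Set (Sym2 α)} {S T : Set α}
    (hm : m.Pairwise fun e f => ∀ x, x ∈ e → x ∉ f)
    (hST : ∀ x ∈ S, x ∉ T)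
    (hform : ∀ e ∈ m, ∃ a b, a ∈ S ∧ b ∈ T ∧ e = s(a, b))
    (hcov : ∀ a ∈ S, ∃ e ∈ m, a ∈ e) : m.ncard = S.ncard := by
  have hmem := matching_epick_mem hST hform
  have hinj : Set.InjOn (epick S) m := matching_injOn hm fun e he => (hmem e he).2.1
  rw [← matching_image_eq hm hST hform hcov, Set.ncard_image_of_injOn hinj]

lemma matching_cover_of_ncard {m : Set (Sym2 α)} {S T : Set α}
    (hm : m.Pairwise fun e f => ∀ x, x ∈ e → x ∉ f)
    (hST : ∀ x ∈ S, x ∉ T) (hSfin : S.Finite)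
    (hform : ∀ e ∈ m, ∃ a b, a ∈ S ∧ b ∈ T ∧ e = s(a, b))
    (hcard : m.ncard = S.ncard) : ∀ a ∈ S, ∃ e ∈ m, a ∈ e := by
  have hmem := matching_epick_mem hST hform
  have hinj : Set.InjOn (epick S) m := matching_injOn hm fun e he => (hmem e he).2.1
  have himg : epick S '' m ⊆ S := by
    rintro x ⟨e, he, rfl⟩; exact (hmem e he).1
  have heq : epick S '' m = S := by
    apply Set.eq_of_subset_of_ncard_le himg _ hSfin
    rw [Set.ncard_image_of_injOn hinj, hcard]
  intro a ha
  rw [← heq] at ha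
  obtain ⟨e, he, hpe⟩ := ha
  exact ⟨e, he, hpe ▸ (hmem e he).2.1⟩

end Helpers

/-- One-sided certificate for independence of `X ∪ Z` relative to interface `W`. -/
def okSide {α : Type*} (G : SimpleGraph α) (X W AU AV BU BV : Set α) : Prop :=
  W ∩ AU ⊆ X ∧ W ∩ BU ∩ X = ∅ ∧
  ∃ m : Set (Sym2 α), IsGraphMatching G m ∧ m.Finite ∧
    (∀ e ∈ m, ∃ a b, e = s(a, b) ∧
      ((a ∈ (X ∩ AU) \ W ∧ b ∈ (BU \ (X ∪ W)) ∪ (W ∩ BV)) ∨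
       (a ∈ W ∩ AV ∧ b ∈ BU \ (X ∪ W)))) ∧
    (∀ a ∈ ((X ∩ AU) \ W) ∪ (W ∩ AV), ∃ e ∈ m, a ∈ e)

/-- The interface set extracted from a global matching `m`. -/
def sideW {α : Type*} (m : Set (Sym2 α)) (C A B u v : Set α) : Set α :=
  {x | x ∈ C ∧ ((x ∈ A ∩ u ∧ ∃ b ∈ B ∩ v, s(x, b) ∈ m) ∨
                (x ∈ B ∩ v ∧ ∃ a ∈ (A ∩ u) \ C, s(a, x) ∈ m) ∨
                (x ∈ A ∩ v ∧ ∃ b ∈ B ∩ u, s(x, b) ∈ m) ∨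
                (x ∈ B ∩ u ∧ ∃ a ∈ (A ∩ v) \ C, s(a, x) ∈ m))}

lemma sideW_comm {α : Type*} (m : Set (Sym2 α)) (C A B u v : Set α) :
    sideW m C A B u v = sideW m C A B v u := by
  ext x
  simp only [sideW, Set.mem_setOf_eq]
  refine and_congr_right fun _ => ?_
  constructor
  · rintro (h | h | h | h)
    exacts [Or.inr (Or.inr (Or.inl h)), Or.inr (Or.inr (Or.inr h)), Or.inl h, Or.inr (Or.inl h)]
  · rintro (h | h | h | h)
    exacts [Or.inr (Or.inr (Or.inl h)), Or.inr (Or.inr (Or.inr h)), Or.inl h, Or.inr (Or.inl h)]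

lemma sideW_subset {α : Type*} (m : Set (Sym2 α)) (C A B u v : Set α) :
    sideW m C A B u v ⊆ C := fun _ hx => hx.1

section Main
variable {α : Type*} [Nonempty α]

lemma recomp (G : SimpleGraph α) {A B U V X Z W : Set α}
    (hAB : Disjoint A B) (hUV : Disjoint U V) (hX : X ⊆ U) (hZ : Z ⊆ V)
    (h1 : okSide G X W (A ∩ U) (A ∩ V) (B ∩ U) (B ∩ V))
    (h2 : okSide G Z W (A ∩ V) (A ∩ U) (B ∩ V) (B ∩ U)) :
    ∃ m, CertifiesIndep G A B (X ∪ Z) m := by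
  obtain ⟨hWA1, hWB1, m₁, hg₁, hfin₁, hform₁, hcov₁⟩ := h1
  obtain ⟨hWA2, hWB2, m₂, hg₂, hfin₂, hform₂, hcov₂⟩ := h2
  have hab := Set.disjoint_left.mp hAB
  have huv := Set.disjoint_left.mp hUV
  have hbT1 : ∀ b, b ∈ (B ∩ U) \ (X ∪ W) → b ∈ B \ (X ∪ Z) := by
    rintro b ⟨⟨hbB, hbU⟩, hbn⟩
    exact ⟨hbB, fun h => h.elim (fun h => hbn (Or.inl h)) (fun h => huv hbU (hZ h))⟩
  have hbT2 : ∀ b, b ∈ W ∩ (B ∩ V) → b ∈ B \ (X ∪ Z) := by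
    rintro b ⟨hbw, hbB, hbV⟩
    refine ⟨hbB, fun h => h.elim (fun h => huv (hX h) hbV) (fun h => ?_)⟩
    have : b ∈ W ∩ (B ∩ V) ∩ Z := ⟨⟨hbw, hbB, hbV⟩, h⟩
    rw [hWB2] at this
    exact this
  have hbT3 : ∀ b, b ∈ (B ∩ V) \ (Z ∪ W) → b ∈ B \ (X ∪ Z) := by
    rintro b ⟨⟨hbB, hbV⟩, hbn⟩
    exact ⟨hbB, fun h => h.elim (fun h => huv (hX h) hbV) (fun h => hbn (Or.inl h))⟩
  have hbT4 : ∀ b, b ∈ W ∩ (B ∩ U) → b ∈ B \ (X ∪ Z) := by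
    rintro b ⟨hbw, hbB, hbU⟩
    refine ⟨hbB, fun h => h.elim (fun h => ?_) (fun h => huv hbU (hZ h))⟩
    have : b ∈ W ∩ (B ∩ U) ∩ X := ⟨⟨hbw, hbB, hbU⟩, h⟩
    rw [hWB1] at this
    exact this
  have hvert₁ : ∀ e ∈ m₁, ∀ x ∈ e,
      x ∈ (X ∩ (A ∩ U)) \ W ∪ W ∩ (A ∩ V) ∨ x ∈ (B ∩ U) \ (X ∪ W) ∪ W ∩ (B ∩ V) := by
    intro e he x hx
    obtain ⟨a, b, rfl, hc⟩ := hform₁ e he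
    rw [Sym2.mem_iff] at hx
    rcases hx with rfl | rfl
    · rcases hc with ⟨ha, _⟩ | ⟨ha, _⟩
      · exact Or.inl (Or.inl ha)
      · exact Or.inl (Or.inr ha)
    · rcases hc with ⟨_, hb⟩ | ⟨_, hb⟩
      · exact Or.inr hb
      · exact Or.inr (Or.inl hb)
  have hvert₂ : ∀ e ∈ m₂, ∀ x ∈ e,
      x ∈ (Z ∩ (A ∩ V)) \ W ∪ W ∩ (A ∩ U) ∨ x ∈ (B ∩ V) \ (Z ∪ W) ∪ W ∩ (B ∩ U) := by
    intro e he x hx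
    obtain ⟨a, b, rfl, hc⟩ := hform₂ e he
    rw [Sym2.mem_iff] at hx
    rcases hx with rfl | rfl
    · rcases hc with ⟨ha, _⟩ | ⟨ha, _⟩
      · exact Or.inl (Or.inl ha)
      · exact Or.inl (Or.inr ha)
    · rcases hc with ⟨_, hb⟩ | ⟨_, hb⟩
      · exact Or.inr hb
      · exact Or.inr (Or.inl hb)
  have hsep : ∀ x, (x ∈ (X ∩ (A ∩ U)) \ W ∪ W ∩ (A ∩ V) ∨ x ∈ (B ∩ U) \ (X ∪ W) ∪ W ∩ (B ∩ V)) →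
      (x ∈ (Z ∩ (A ∩ V)) \ W ∪ W ∩ (A ∩ U) ∨ x ∈ (B ∩ V) \ (Z ∪ W) ∪ W ∩ (B ∩ U)) → False := by
    intro x h₁ h₂
    have hab' : x ∈ A → x ∈ B → False := fun h h' => hab h h'
    have huv' : x ∈ U → x ∈ V → False := fun h h' => huv h h'
    simp only [Set.mem_union, Set.mem_inter_iff, Set.mem_diff, Set.mem_union] at h₁ h₂
    tauto
  have hpair : (m₁ ∪ m₂).Pairwise fun e f => ∀ x, x ∈ e → x ∉ f := by
    intro e he f hf hne x hxe hxf
    rcases he with he | he <;> rcases hf with hf | hf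
    · exact hg₁.2 he hf hne x hxe hxf
    · exact hsep x (hvert₁ e he x hxe) (hvert₂ f hf x hxf)
    · exact hsep x (hvert₁ f hf x hxf) (hvert₂ e he x hxe)
    · exact hg₂.2 he hf hne x hxe hxf
  have hSdecomp : (X ∪ Z) ∩ A =
      ((X ∩ (A ∩ U)) \ W ∪ W ∩ (A ∩ V)) ∪ ((Z ∩ (A ∩ V)) \ W ∪ W ∩ (A ∩ U)) := by
    ext x
    simp only [Set.mem_inter_iff, Set.mem_union, Set.mem_diff]
    constructor
    · rintro ⟨hx | hx, hA⟩
      · by_cases hw : x ∈ W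
        · exact Or.inr (Or.inr ⟨hw, hA, hX hx⟩)
        · exact Or.inl (Or.inl ⟨⟨hx, hA, hX hx⟩, hw⟩)
      · by_cases hw : x ∈ W
        · exact Or.inl (Or.inr ⟨hw, hA, hZ hx⟩)
        · exact Or.inr (Or.inl ⟨⟨hx, hA, hZ hx⟩, hw⟩)
    · rintro ((⟨⟨h1, h2, _⟩, _⟩ | ⟨hw, h2, h3⟩) | (⟨⟨h1, h2, _⟩, _⟩ | ⟨hw, h2, h3⟩))
      · exact ⟨Or.inl h1, h2⟩
      · exact ⟨Or.inr (hWA2 ⟨hw, h2, h3⟩), h2⟩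
      · exact ⟨Or.inr h1, h2⟩
      · exact ⟨Or.inl (hWA1 ⟨hw, h2, h3⟩), h2⟩
  have hformU : ∀ e ∈ m₁ ∪ m₂, ∃ a b, a ∈ (X ∪ Z) ∩ A ∧ b ∈ B \ (X ∪ Z) ∧ e = s(a, b) := by
    intro e he
    rcases he with he | he
    · obtain ⟨a, b, rfl, hc⟩ := hform₁ e he
      rcases hc with ⟨⟨⟨hax, haA, _⟩, _⟩, hb⟩ | ⟨⟨haw, haA, haV⟩, hb⟩
      · exact ⟨a, b, ⟨Or.inl hax, haA⟩, hb.elim (hbT1 b) (hbT2 b), rfl⟩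
      · exact ⟨a, b, ⟨Or.inr (hWA2 ⟨haw, haA, haV⟩), haA⟩, hbT1 b hb, rfl⟩
    · obtain ⟨a, b, rfl, hc⟩ := hform₂ e he
      rcases hc with ⟨⟨⟨hax, haA, _⟩, _⟩, hb⟩ | ⟨⟨haw, haA, haU⟩, hb⟩
      · exact ⟨a, b, ⟨Or.inr hax, haA⟩, hb.elim (hbT3 b) (hbT4 b), rfl⟩
      · exact ⟨a, b, ⟨Or.inl (hWA1 ⟨haw, haA, haU⟩), haA⟩, hbT3 b hb, rfl⟩
  have hcovU : ∀ a ∈ (X ∪ Z) ∩ A, ∃ e ∈ m₁ ∪ m₂, a ∈ e := by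
    rw [hSdecomp]
    rintro a (h | h)
    · obtain ⟨e, he, hae⟩ := hcov₁ a h
      exact ⟨e, Or.inl he, hae⟩
    · obtain ⟨e, he, hae⟩ := hcov₂ a h
      exact ⟨e, Or.inr he, hae⟩
  refine ⟨m₁ ∪ m₂, ⟨Set.union_subset hg₁.1 hg₂.1, hpair⟩, hfin₁.union hfin₂, ?_, hformU⟩
  exact matching_ncard_eq hpair (fun x hx h => hab hx.2 h.1) hformU hcovU

lemma decomp_side (G : SimpleGraph α) {A B C : Set α} (hAB : Disjoint A B)
    (hABfin : (A ∪ B).Finite)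
    {u v X Z : Set α} (huv : u ∪ v = A ∪ B) (hduv : Disjoint u v)
    (hX : X ⊆ u) (hZ : Z ⊆ v) {m : Set (Sym2 α)}
    (hcov1 : ∀ a b, s(a, b) ∈ m → a ∈ A ∩ u → b ∈ B ∩ v → a ∈ C ∨ b ∈ C)
    (hm : CertifiesIndep G A B (X ∪ Z) m) :
    okSide G X (sideW m C A B u v) (A ∩ u) (A ∩ v) (B ∩ u) (B ∩ v) := by
  obtain ⟨⟨hmG, hmp⟩, hmfin, hmcard, hmform⟩ := hm
  set W := sideW m C A B u v with hWdef
  have hab := Set.disjoint_left.mp hAB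
  have huvd := Set.disjoint_left.mp hduv
  have hWC : W ⊆ C := fun _ hx => hx.1
  have hcanon : ∀ a b, s(a, b) ∈ m → a ∈ A → b ∈ B → a ∈ X ∪ Z ∧ b ∉ X ∪ Z := by
    intro a b he haA hbB
    obtain ⟨a', b', ha', hb', heq⟩ := hmform _ he
    rcases Sym2.eq_iff.mp heq with ⟨rfl, rfl⟩ | ⟨rfl, rfl⟩
    · exact ⟨ha'.1, hb'.2⟩
    · exact absurd hb'.1 (fun h => hab haA h)
  have huniq : ∀ e ∈ m, ∀ f ∈ m, ∀ x, x ∈ e → x ∈ f → e = f := by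
    intro e he f hf x hxe hxf
    by_contra hne
    exact hmp he hf hne x hxe hxf
  have haX : ∀ a b, s(a, b) ∈ m → a ∈ A → a ∈ u → b ∈ B → a ∈ X := by
    intro a b he haA hau hbB
    rcases (hcanon a b he haA hbB).1 with h | h
    · exact h
    · exact absurd (hZ h) (fun h' => huvd hau h')
  have hWAu : ∀ x ∈ W, x ∈ A ∩ u → ∃ b ∈ B ∩ v, s(x, b) ∈ m := by
    rintro x ⟨hxC, hcase⟩ hxAu
    rcases hcase with ⟨_, h⟩ | ⟨hxBv, _⟩ | ⟨hxAv, _⟩ | ⟨hxBu, _⟩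
    · exact h
    · exact absurd hxBv.1 (fun h => hab hxAu.1 h)
    · exact absurd hxAv.2 (fun h => huvd hxAu.2 h)
    · exact absurd hxBu.1 (fun h => hab hxAu.1 h)
  have hWAv : ∀ x ∈ W, x ∈ A ∩ v → x ∈ C ∧ ∃ b ∈ B ∩ u, s(x, b) ∈ m := by
    rintro x ⟨hxC, hcase⟩ hxAv
    rcases hcase with ⟨hxAu, _⟩ | ⟨hxBv, _⟩ | ⟨_, h⟩ | ⟨hxBu, _⟩
    · exact absurd hxAu.2 (fun h => huvd h hxAv.2)
    · exact absurd hxBv.1 (fun h => hab hxAv.1 h)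
    · exact ⟨hxC, h⟩
    · exact absurd hxBu.1 (fun h => hab hxAv.1 h)
  have hWBu : ∀ x ∈ W, x ∈ B ∩ u → ∃ a ∈ (A ∩ v) \ C, s(a, x) ∈ m := by
    rintro x ⟨hxC, hcase⟩ hxBu
    rcases hcase with ⟨hxAu, _⟩ | ⟨hxBv, _⟩ | ⟨hxAv, _⟩ | ⟨_, h⟩
    · exact absurd hxAu.1 (fun h => hab h hxBu.1)
    · exact absurd hxBv.2 (fun h => huvd hxBu.2 h)
    · exact absurd hxAv.1 (fun h => hab h hxBu.1)
    · exact h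
  have hScov : ∀ a ∈ (X ∪ Z) ∩ A, ∃ e ∈ m, a ∈ e := by
    refine matching_cover_of_ncard hmp (fun x hx h => hab hx.2 h.1) ?_ hmform hmcard
    exact hABfin.subset (fun x hx => Or.inl hx.2)
  set mU := {e ∈ m | ∃ a b, e = s(a, b) ∧
      ((a ∈ A ∩ u ∧ b ∈ B ∩ u) ∨ (a ∈ (A ∩ u) \ C ∧ b ∈ B ∩ v) ∨
       (a ∈ C ∩ (A ∩ v) ∧ b ∈ B ∩ u))} with hmUdef
  have hmUm : mU ⊆ m := fun e he => he.1
  have hbnW : ∀ a b, s(a, b) ∈ m → a ∈ A → a ∉ (A ∩ v) \ C → b ∈ B ∩ u → b ∉ W := by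
    intro a b he haA hanc hbBu hbW
    obtain ⟨a₂, ha₂, he₂⟩ := hWBu b hbW hbBu
    have heq := huniq _ he _ he₂ b (by simp) (by simp)
    rcases Sym2.eq_iff.mp heq with ⟨rfl, _⟩ | ⟨rfl, rfl⟩
    · exact hanc ha₂
    · exact hab haA hbBu.1
  refine ⟨?_, ?_, mU, ⟨fun e he => hmG (hmUm he), hmp.mono hmUm⟩, hmfin.subset hmUm, ?_, ?_⟩
  · rintro x ⟨hxW, hxAu⟩
    obtain ⟨b, hbBv, hedge⟩ := hWAu x hxW hxAu
    exact haX x b hedge hxAu.1 hxAu.2 hbBv.1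
  · ext x
    simp only [Set.mem_inter_iff, Set.mem_empty_iff_false, iff_false, not_and]
    rintro ⟨hxW, hxBu⟩ hxX
    obtain ⟨a, haAvC, hedge⟩ := hWBu x hxW hxBu
    exact (hcanon a x hedge haAvC.1.1 hxBu.1).2 (Or.inl hxX)
  · rintro e ⟨he, a, b, rfl, hcase⟩
    rcases hcase with ⟨haAu, hbBu⟩ | ⟨haAuC, hbBv⟩ | ⟨haCAv, hbBu⟩
    · have haX' := haX a b he haAu.1 haAu.2 hbBu.1
      have hanW : a ∉ W := by
        intro haW
        obtain ⟨b₂, hb₂, he₂⟩ := hWAu a haW haAu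
        have heq := huniq _ he _ he₂ a (by simp) (by simp)
        rcases Sym2.eq_iff.mp heq with ⟨_, rfl⟩ | ⟨rfl, rfl⟩
        · exact huvd hbBu.2 hb₂.2
        · exact hab haAu.1 hbBu.1
      have hbnX := (hcanon a b he haAu.1 hbBu.1).2
      have hbW : b ∉ W := hbnW a b he haAu.1 (fun h => huvd haAu.2 h.1.2) hbBu
      exact ⟨a, b, rfl, Or.inl ⟨⟨⟨haX', haAu⟩, hanW⟩,
        Or.inl ⟨hbBu, fun h => h.elim (fun h => hbnX (Or.inl h)) hbW⟩⟩⟩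
    · have haX' := haX a b he haAuC.1.1 haAuC.1.2 hbBv.1
      have hbC : b ∈ C := by
        rcases hcov1 a b he haAuC.1 hbBv with h | h
        · exact absurd h haAuC.2
        · exact h
      have hbW : b ∈ W := ⟨hbC, Or.inr (Or.inl ⟨hbBv, a, haAuC, he⟩)⟩
      have hanW : a ∉ W := fun h => haAuC.2 (hWC h)
      exact ⟨a, b, rfl, Or.inl ⟨⟨⟨haX', haAuC.1⟩, hanW⟩, Or.inr ⟨hbW, hbBv⟩⟩⟩
    · have haW : a ∈ W := ⟨haCAv.1, Or.inr (Or.inr (Or.inl ⟨haCAv.2, b, hbBu, he⟩))⟩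
      have hbnX := (hcanon a b he haCAv.2.1 hbBu.1).2
      have hbW : b ∉ W := hbnW a b he haCAv.2.1 (fun h => h.2 haCAv.1) hbBu
      exact ⟨a, b, rfl, Or.inr ⟨⟨haW, haCAv.2⟩,
        ⟨hbBu, fun h => h.elim (fun h => hbnX (Or.inl h)) hbW⟩⟩⟩
  · rintro a (⟨⟨haXm, haAu⟩, hanW⟩ | ⟨haW, haAv⟩)
    · obtain ⟨e, he, hae⟩ := hScov a ⟨Or.inl haXm, haAu.1⟩
      obtain ⟨a', b', ha', hb', rfl⟩ := hmform e he
      have : a = a' := by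
        rcases Sym2.mem_iff.mp hae with h | h
        · exact h
        · exact absurd hb'.1 (fun hh => hab haAu.1 (h ▸ hh))
      subst this
      have hb'uv : b' ∈ u ∪ v := huv ▸ Or.inr hb'.1
      rcases hb'uv with hbu | hbv
      · exact ⟨s(a, b'), ⟨he, a, b', rfl, Or.inl ⟨haAu, hb'.1, hbu⟩⟩, by simp⟩
      · have hanC : a ∉ C := by
          intro haC
          exact hanW ⟨haC, Or.inl ⟨haAu, b', ⟨hb'.1, hbv⟩, he⟩⟩
        exact ⟨s(a, b'), ⟨he, a, b', rfl, Or.inr (Or.inl ⟨⟨haAu, hanC⟩, hb'.1, hbv⟩)⟩, by simp⟩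
    · obtain ⟨haC, b, hbBu, hedge⟩ := hWAv a haW haAv
      exact ⟨s(a, b), ⟨hedge, a, b, rfl, Or.inr (Or.inr ⟨⟨haC, haAv⟩, hbBu⟩)⟩, by simp⟩

end Main

lemma le_mrank' {α : Type*} {M : Matroid α} (hfinE : M.E.Finite) {I X : Set α}
    (hIX : I ⊆ X) (hI : M.Indep I) : I.ncard ≤ mrank M X := by
  apply le_csSup
  · refine ⟨M.E.ncard, ?_⟩
    rintro n ⟨J, hJX, hJ, rfl⟩
    exact Set.ncard_le_ncard hJ.subset_ground hfinE
  · exact ⟨I, hIX, hI, rfl⟩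

lemma mrank_le' {α : Type*} {M : Matroid α} {X : Set α} {n : ℕ}
    (h : ∀ I, I ⊆ X → M.Indep I → I.ncard ≤ n) : mrank M X ≤ n := by
  apply csSup_le
  · exact ⟨0, ∅, Set.empty_subset _, M.empty_indep, by simp⟩
  · rintro k ⟨I, h1, h2, rfl⟩
    exact h I h1 h2

lemma two_mul_le_two_pow {l : ℕ} (hl : 0 < l) : 2 * l ≤ 2 ^ l := by
  induction l with
  | zero => omega
  | succ n ih =>
    rcases Nat.eq_zero_or_pos n with rfl | hn
    · simp
    · have h2 : (2 : ℕ) ≤ 2 ^ n := by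
        calc (2 : ℕ) = 2 ^ 1 := (pow_one 2).symm
          _ ≤ 2 ^ n := Nat.pow_le_pow_right (by norm_num) hn
      have := ih hn
      rw [pow_succ]
      omega

/-- for the fundamental transversal matroid of a finite bipartite graph,
if λ_{M[G]}(U) ≤ λ then ∼_U has at most 2^(2^(2^λ)) + 1 classes. -/
theorem fundamental_transversal_sim_classes {α : Type*} (G : SimpleGraph α) (A B : Set α)
    (hfin : (A ∪ B).Finite) (hAB : Disjoint A B)
    (hbip : ∀ x y, G.Adj x y → (x ∈ A ∧ y ∈ B) ∨ (x ∈ B ∧ y ∈ A))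
    (M : Matroid α) (hE : M.E = A ∪ B)
    (hInd : ∀ X ⊆ A ∪ B, (M.Indep X ↔ ∃ m, CertifiesIndep G A B X m))
    (l : ℕ) (hl : 0 < l) (U V : Set α)
    (hUV : U ∪ V = A ∪ B) (hdisj : Disjoint U V)
    (hconn : connVal M U ≤ l) :
    SimClassesLE M U (2 ^ 2 ^ 2 ^ l + 1) := by
  classical
  rcases isEmpty_or_nonempty α with hemp | hα
  · refine ⟨fun _ => ⟨0, Nat.succ_pos _⟩, ?_⟩
    intro X X' _ _ _
    have hXX : X = X' := by
      ext x
      exact (IsEmpty.false x).elim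
    subst hXX
    intro Z _
    exact Iff.rfl
  -- basic facts
  have hab := Set.disjoint_left.mp hAB
  have huvd := Set.disjoint_left.mp hdisj
  have hUAB : U ⊆ A ∪ B := hUV ▸ Set.subset_union_left
  have hVAB : V ⊆ A ∪ B := hUV ▸ Set.subset_union_right
  have hEfin : M.E.Finite := hE ▸ hfin
  have hMEU : M.E \ U = V := by
    rw [hE, ← hUV]
    ext x
    simp only [Set.mem_diff, Set.mem_union]
    constructor
    · rintro ⟨h | h, hn⟩
      · exact absurd h hn
      · exact h
    · intro h
      exact ⟨Or.inr h, fun h' => huvd h' h⟩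
  -- maximum cross matchings
  have hmaxgen : ∀ u' v' : Set α, (A ∩ u').Finite → ∃ N : Set (Sym2 α),
      IsGraphMatching G N ∧ N.Finite ∧
      (∀ e ∈ N, ∃ a b, a ∈ A ∩ u' ∧ b ∈ B ∩ v' ∧ e = s(a, b)) ∧
      (∀ m', IsGraphMatching G m' →
        (∀ e ∈ m', ∃ a b, a ∈ A ∩ u' ∧ b ∈ B ∩ v' ∧ e = s(a, b)) →
        m'.ncard ≤ N.ncard) := by
    intro u' v' hufin
    have hST : ∀ x ∈ A ∩ u', x ∉ B ∩ v' := fun x hx h => hab hx.1 h.1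
    set S := {n | ∃ m' : Set (Sym2 α), IsGraphMatching G m' ∧
      (∀ e ∈ m', ∃ a b, a ∈ A ∩ u' ∧ b ∈ B ∩ v' ∧ e = s(a, b)) ∧ m'.ncard = n} with hSdef
    have hne : S.Nonempty :=
      ⟨0, ∅, ⟨Set.empty_subset _, Set.pairwise_empty _⟩, by simp, by simp⟩
    have hbdd : BddAbove S := by
      refine ⟨(A ∩ u').ncard, ?_⟩
      rintro n ⟨m', hg, hform, rfl⟩
      exact matching_ncard_le hg.2 hST hufin hform
    obtain ⟨N, hgN, hformN, hcardN⟩ := Nat.sSup_mem hne hbdd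
    refine ⟨N, hgN, matching_finite hgN.2 hST hufin hformN, hformN, ?_⟩
    intro m' hg' hform'
    rw [hcardN]
    exact le_csSup hbdd ⟨m', hg', hform', rfl⟩
  obtain ⟨N₁, hN₁g, hN₁f, hN₁form, hN₁max⟩ :=
    hmaxgen U V (hfin.subset fun x hx => Or.inl hx.1)
  obtain ⟨N₂, hN₂g, hN₂f, hN₂form, hN₂max⟩ :=
    hmaxgen V U (hfin.subset fun x hx => Or.inl hx.1)
  set C := {x | ∃ e ∈ N₁ ∪ N₂, x ∈ e} with hCdef
  have hCmem : ∀ (x : α) (f : Sym2 α), f ∈ N₁ ∪ N₂ → x ∈ f → x ∈ C :=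
    fun x f hf hx => ⟨f, hf, hx⟩
  -- cover properties
  have hcovgen : ∀ (N : Set (Sym2 α)) (u' v' : Set α), IsGraphMatching G N → N.Finite →
      (∀ e ∈ N, ∃ a b, a ∈ A ∩ u' ∧ b ∈ B ∩ v' ∧ e = s(a, b)) →
      (∀ m', IsGraphMatching G m' →
        (∀ e ∈ m', ∃ a b, a ∈ A ∩ u' ∧ b ∈ B ∩ v' ∧ e = s(a, b)) →
        m'.ncard ≤ N.ncard) →
      (N ⊆ N₁ ∪ N₂) →
      ∀ a b, G.Adj a b → a ∈ A ∩ u' → b ∈ B ∩ v' → a ∈ C ∨ b ∈ C := by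
    intro N u' v' hNg hNf hNform hNmax hNsub a b hadj haAU hbBV
    by_contra hc
    push_neg at hc
    have hnotin : s(a, b) ∉ N := fun h => hc.1 (hCmem a _ (hNsub h) (by simp))
    have hins : IsGraphMatching G (insert s(a, b) N) := by
      refine ⟨Set.insert_subset (G.mem_edgeSet.mpr hadj) hNg.1, ?_⟩
      intro e he f hf hne x hxe hxf
      rcases Set.mem_insert_iff.mp he with rfl | heN
      · rcases Set.mem_insert_iff.mp hf with rfl | hfN
        · exact hne rfl
        · rcases Sym2.mem_iff.mp hxe with rfl | rfl
          · exact hc.1 (hCmem x f (hNsub hfN) hxf)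
          · exact hc.2 (hCmem x f (hNsub hfN) hxf)
      · rcases Set.mem_insert_iff.mp hf with rfl | hfN
        · rcases Sym2.mem_iff.mp hxf with rfl | rfl
          · exact hc.1 (hCmem x e (hNsub heN) hxe)
          · exact hc.2 (hCmem x e (hNsub heN) hxe)
        · exact hNg.2 heN hfN hne x hxe hxf
    have hformins : ∀ e ∈ insert s(a, b) N,
        ∃ a' b', a' ∈ A ∩ u' ∧ b' ∈ B ∩ v' ∧ e = s(a', b') := by
      intro e he
      rcases Set.mem_insert_iff.mp he with rfl | he
      · exact ⟨a, b, haAU, hbBV, rfl⟩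
      · exact hNform e he
    have hle := hNmax _ hins hformins
    rw [Set.ncard_insert_of_notMem hnotin hNf] at hle
    omega
  have hcov1 : ∀ a b, G.Adj a b → a ∈ A ∩ U → b ∈ B ∩ V → a ∈ C ∨ b ∈ C :=
    hcovgen N₁ U V hN₁g hN₁f hN₁form hN₁max Set.subset_union_left
  have hcov2 : ∀ a b, G.Adj a b → a ∈ A ∩ V → b ∈ B ∩ U → a ∈ C ∨ b ∈ C :=
    hcovgen N₂ V U hN₂g hN₂f hN₂form hN₂max Set.subset_union_right
  -- size of C
  have hNfin : (N₁ ∪ N₂).Finite := hN₁f.union hN₂f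
  have hNform : ∀ e ∈ N₁ ∪ N₂, ∃ a b, a ∈ A ∧ b ∈ B ∧ e = s(a, b) := by
    intro e he
    rcases he with he | he
    · obtain ⟨a, b, ha, hb, rfl⟩ := hN₁form e he
      exact ⟨a, b, ha.1, hb.1, rfl⟩
    · obtain ⟨a, b, ha, hb, rfl⟩ := hN₂form e he
      exact ⟨a, b, ha.1, hb.1, rfl⟩
  have hCsub : C ⊆ A ∪ B := by
    rintro x ⟨e, he, hx⟩
    obtain ⟨a, b, ha, hb, rfl⟩ := hNform e he
    rcases Sym2.mem_iff.mp hx with rfl | rfl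
    · exact Or.inl ha
    · exact Or.inr hb
  have hCfin : C.Finite := hfin.subset hCsub
  have hCcard : C.ncard ≤ 2 * (N₁.ncard + N₂.ncard) := by
    have himg : C ⊆ (epick A '' (N₁ ∪ N₂)) ∪ (epick B '' (N₁ ∪ N₂)) := by
      rintro x ⟨e, he, hx⟩
      obtain ⟨a, b, ha, hb, rfl⟩ := hNform e he
      rcases Sym2.mem_iff.mp hx with rfl | rfl
      · exact Or.inl ⟨_, he, epick_eq (fun y hy h => hab hy h) ha hb⟩
      · refine Or.inr ⟨_, he, ?_⟩
        have hswap : s(a, x) = s(x, a) := Sym2.eq_swap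
        rw [hswap]
        exact epick_eq (fun y hy h => hab h hy) hb ha
    calc C.ncard ≤ ((epick A '' (N₁ ∪ N₂)) ∪ (epick B '' (N₁ ∪ N₂))).ncard :=
          Set.ncard_le_ncard himg ((hNfin.image _).union (hNfin.image _))
      _ ≤ (epick A '' (N₁ ∪ N₂)).ncard + (epick B '' (N₁ ∪ N₂)).ncard :=
          Set.ncard_union_le _ _
      _ ≤ (N₁ ∪ N₂).ncard + (N₁ ∪ N₂).ncard :=
          add_le_add (Set.ncard_image_le hNfin) (Set.ncard_image_le hNfin)
      _ ≤ 2 * (N₁.ncard + N₂.ncard) := by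
          have := Set.ncard_union_le N₁ N₂
          omega
  -- rank computations
  have hBfin : B.Finite := hfin.subset Set.subset_union_right
  have hrankE : mrank M M.E ≤ B.ncard := by
    apply mrank_le'
    intro I hIE hI
    have hIAB : I ⊆ A ∪ B := by rw [← hE]; exact hIE
    obtain ⟨mI, ⟨hg, hp⟩, hfinI, hcard, hform⟩ := (hInd I hIAB).mp hI
    have hIfin := hfin.subset hIAB
    have hcnt : mI.ncard ≤ (B \ I).ncard := by
      refine matching_ncard_le hp
        (fun x (hx : x ∈ B \ I) (h : x ∈ I ∩ A) => hab h.2 hx.1)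
        (hBfin.subset Set.diff_subset) ?_
      intro e he
      obtain ⟨a, b, ha, hb, rfl⟩ := hform e he
      exact ⟨b, a, hb, ha, Sym2.eq_swap⟩
    have hsplitI : I.ncard = (I ∩ A).ncard + (I ∩ B).ncard := by
      have hd : Disjoint (I ∩ A) (I ∩ B) :=
        Set.disjoint_left.mpr fun x hx h => hab hx.2 h.2
      have hu : (I ∩ A) ∪ (I ∩ B) = I := by
        rw [← Set.inter_union_distrib_left]
        exact Set.inter_eq_self_of_subset_left hIAB
      have h2 := Set.ncard_union_eq hd (hIfin.subset Set.inter_subset_left)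
        (hIfin.subset Set.inter_subset_left)
      rw [hu] at h2
      exact h2
    have hsplitB : (B \ I).ncard + (I ∩ B).ncard = B.ncard := by
      have h1 := Set.ncard_diff_add_ncard_of_subset
        (Set.inter_subset_right : I ∩ B ⊆ B) hBfin
      have heq : B \ (I ∩ B) = B \ I := by
        ext x
        simp only [Set.mem_diff, Set.mem_inter_iff]
        tauto
      rwa [heq] at h1
    omega
  have hrankgen : ∀ (N : Set (Sym2 α)) (u' : Set α), IsGraphMatching G N → N.Finite →
      (∀ e ∈ N, ∃ a b, a ∈ A ∩ u' ∧ b ∈ B \ u' ∧ e = s(a, b)) →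
      u' ⊆ A ∪ B →
      (B ∩ u').ncard + N.ncard ≤ mrank M u' := by
    intro N u' hNg hNf' hNform' hu'AB
    have hepick : ∀ e ∈ N, epick A e ∈ e ∧
        ∀ a b, a ∈ A ∩ u' → b ∈ B \ u' → e = s(a, b) → epick A e = a := by
      intro e he
      obtain ⟨a, b, ha, hb, rfl⟩ := hNform' e he
      have h1 : epick A s(a, b) = a := epick_eq (fun y hy h => hab hy h) ha.1 hb.1
      refine ⟨by rw [h1]; simp, ?_⟩
      intro a' b' ha' hb' hee
      rw [hee] at h1 ⊢
      exact epick_eq (fun y hy h => hab hy h) ha'.1 hb'.1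
    have himgAU : epick A '' N ⊆ A ∩ u' := by
      rintro x ⟨e, he, rfl⟩
      obtain ⟨a, b, ha, hb, rfl⟩ := hNform' e he
      rw [(hepick _ he).2 a b ha hb rfl]
      exact ha
    have hinj := matching_injOn hNg.2 (fun e he => (hepick e he).1)
    set I := (B ∩ u') ∪ (epick A '' N) with hIdef
    have hIU : I ⊆ u' := Set.union_subset (fun x hx => hx.2) (fun x hx => (himgAU hx).2)
    have hIA : I ∩ A = epick A '' N := by
      apply Set.Subset.antisymm
      · rintro x ⟨hxI, hxA⟩
        rcases hxI with h | h
        · exact (hab hxA h.1).elim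
        · exact h
      · intro x hx
        exact ⟨Or.inr hx, (himgAU hx).1⟩
    have hindI : M.Indep I := by
      apply (hInd I (hIU.trans hu'AB)).mpr
      refine ⟨N, hNg, hNf', ?_, ?_⟩
      · rw [hIA, Set.ncard_image_of_injOn hinj]
      · intro e he
        obtain ⟨a, b, ha, hb, rfl⟩ := hNform' e he
        refine ⟨a, b, ?_, ⟨hb.1, fun h => hb.2 (hIU h)⟩, rfl⟩
        rw [hIA]
        exact ⟨_, he, (hepick _ he).2 a b ha hb rfl⟩
    have hIcard : I.ncard = (B ∩ u').ncard + N.ncard := by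
      rw [hIdef, Set.ncard_union_eq
        (Set.disjoint_left.mpr fun x hx h => hab (himgAU h).1 hx.1)
        (hBfin.subset (fun x hx => hx.1)) (hNf'.image _),
        Set.ncard_image_of_injOn hinj]
    calc (B ∩ u').ncard + N.ncard = I.ncard := hIcard.symm
      _ ≤ mrank M u' := le_mrank' hEfin hIU hindI
  have hrankU : (B ∩ U).ncard + N₁.ncard ≤ mrank M U := by
    refine hrankgen N₁ U hN₁g hN₁f ?_ hUAB
    intro e he
    obtain ⟨a, b, ha, hb, rfl⟩ := hN₁form e he
    exact ⟨a, b, ha, ⟨hb.1, fun h => huvd h hb.2⟩, rfl⟩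
  have hrankV : (B ∩ V).ncard + N₂.ncard ≤ mrank M V := by
    refine hrankgen N₂ V hN₂g hN₂f ?_ hVAB
    intro e he
    obtain ⟨a, b, ha, hb, rfl⟩ := hN₂form e he
    exact ⟨a, b, ha, ⟨hb.1, fun h => huvd hb.2 h⟩, rfl⟩
  have hBsplit : B.ncard = (B ∩ U).ncard + (B ∩ V).ncard := by
    have hu : (B ∩ U) ∪ (B ∩ V) = B := by
      rw [← Set.inter_union_distrib_left, hUV]
      exact Set.inter_eq_self_of_subset_left Set.subset_union_right
    have h2 := Set.ncard_union_eq
      (Set.disjoint_left.mpr (fun x hx h => huvd hx.2 h.2) :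
        Disjoint (B ∩ U) (B ∩ V))
      (hBfin.subset (fun x hx => hx.1)) (hBfin.subset (fun x hx => hx.1))
    rw [hu] at h2
    exact h2
  have hconn' : mrank M U + mrank M V - mrank M M.E ≤ l := by
    have : connVal M U = mrank M U + mrank M (M.E \ U) - mrank M M.E := rfl
    rw [this, hMEU] at hconn
    exact hconn
  have hnu : N₁.ncard + N₂.ncard ≤ l := by omega
  have hC2 : C.ncard ≤ 2 * l := by omega
  -- the main equivalence
  have hMain : ∀ X Z : Set α, X ⊆ U → Z ⊆ V →
      (M.Indep (X ∪ Z) ↔ ∃ W, W ⊆ C ∧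
        okSide G X W (A ∩ U) (A ∩ V) (B ∩ U) (B ∩ V) ∧
        okSide G Z W (A ∩ V) (A ∩ U) (B ∩ V) (B ∩ U)) := by
    intro X Z hXU hZV
    constructor
    · intro hind
      obtain ⟨m, hm⟩ :=
        (hInd (X ∪ Z) (Set.union_subset (hXU.trans hUAB) (hZV.trans hVAB))).mp hind
      have hmcov1 : ∀ a b, s(a, b) ∈ m → a ∈ A ∩ U → b ∈ B ∩ V → a ∈ C ∨ b ∈ C :=
        fun a b he ha hb => hcov1 a b (G.mem_edgeSet.mp (hm.1.1 he)) ha hb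
      have hmcov2 : ∀ a b, s(a, b) ∈ m → a ∈ A ∩ V → b ∈ B ∩ U → a ∈ C ∨ b ∈ C :=
        fun a b he ha hb => hcov2 a b (G.mem_edgeSet.mp (hm.1.1 he)) ha hb
      refine ⟨sideW m C A B U V, sideW_subset _ _ _ _ _ _, ?_, ?_⟩
      · exact decomp_side G hAB hfin hUV hdisj hXU hZV hmcov1 hm
      · have hm' : CertifiesIndep G A B (Z ∪ X) m := by
          rwa [Set.union_comm Z X]
        have h := decomp_side G hAB hfin (u := V) (v := U)
          (by rw [Set.union_comm]; exact hUV) hdisj.symm hZV hXU hmcov2 hm'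
        rwa [sideW_comm] at h
    · rintro ⟨W, hWC, h1, h2⟩
      obtain ⟨m, hm⟩ := recomp G hAB hdisj hXU hZV h1 h2
      exact (hInd (X ∪ Z) (Set.union_subset (hXU.trans hUAB) (hZV.trans hVAB))).mpr ⟨m, hm⟩
  -- the encoding
  haveI : Finite ↥C := hCfin.to_subtype
  haveI : Fintype ↥C := Fintype.ofFinite _
  have hcard1 : Fintype.card ↥C ≤ 2 ^ l := by
    have h1 : Nat.card ↥C = C.ncard := Nat.card_coe_set_eq C
    have h2 : Nat.card ↥C = Fintype.card ↥C := Nat.card_eq_fintype_card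
    have h3 : 2 * l ≤ 2 ^ l := two_mul_le_two_pow hl
    omega
  have hcardle : Fintype.card (Set (Set ↥C)) ≤ Fintype.card (Fin (2 ^ 2 ^ 2 ^ l + 1)) := by
    rw [Fintype.card_set, Fintype.card_set, Fintype.card_fin]
    calc (2 : ℕ) ^ 2 ^ Fintype.card ↥C ≤ 2 ^ 2 ^ 2 ^ l := by
          refine Nat.pow_le_pow_right (by norm_num) ?_
          exact Nat.pow_le_pow_right (by norm_num) hcard1
      _ ≤ 2 ^ 2 ^ 2 ^ l + 1 := Nat.le_succ _
  obtain ⟨emb⟩ := Function.Embedding.nonempty_of_card_le hcardle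
  refine ⟨fun X => emb {w : Set ↥C |
    okSide G X (((↑) : ↥C → α) '' w) (A ∩ U) (A ∩ V) (B ∩ U) (B ∩ V)}, ?_⟩
  intro X X' hXU hX'U hfeq
  have hcodeeq := emb.injective hfeq
  have hphi : ∀ W, W ⊆ C →
      (okSide G X W (A ∩ U) (A ∩ V) (B ∩ U) (B ∩ V) ↔
       okSide G X' W (A ∩ U) (A ∩ V) (B ∩ U) (B ∩ V)) := by
    intro W hWC
    have hWimg : ((↑) : ↥C → α) '' {c : ↥C | (c : α) ∈ W} = W := by
      ext x
      simp only [Set.mem_image, Set.mem_setOf_eq]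
      constructor
      · rintro ⟨c, hc, rfl⟩
        exact hc
      · intro hx
        exact ⟨⟨x, hWC hx⟩, hx, rfl⟩
    constructor
    · intro h
      have hmem : {c : ↥C | (c : α) ∈ W} ∈ {w : Set ↥C |
          okSide G X (((↑) : ↥C → α) '' w) (A ∩ U) (A ∩ V) (B ∩ U) (B ∩ V)} := by
        simp only [Set.mem_setOf_eq]
        rw [hWimg]
        exact h
      rw [hcodeeq] at hmem
      simp only [Set.mem_setOf_eq] at hmem
      rwa [hWimg] at hmem
    · intro h
      have hmem : {c : ↥C | (c : α) ∈ W} ∈ {w : Set ↥C |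
          okSide G X' (((↑) : ↥C → α) '' w) (A ∩ U) (A ∩ V) (B ∩ U) (B ∩ V)} := by
        simp only [Set.mem_setOf_eq]
        rw [hWimg]
        exact h
      rw [← hcodeeq] at hmem
      simp only [Set.mem_setOf_eq] at hmem
      rwa [hWimg] at hmem
  intro Z hZmem
  have hZV : Z ⊆ V := hMEU ▸ hZmem
  constructor
  · intro h
    obtain ⟨W, hWC, h1, h2⟩ := (hMain X Z hXU hZV).mp h
    exact (hMain X' Z hX'U hZV).mpr ⟨W, hWC, (hphi W hWC).mp h1, h2⟩
  · intro h
    obtain ⟨W, hWC, h1, h2⟩ := (hMain X' Z hX'U hZV).mp h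
    exact (hMain X Z hXU hZV).mpr ⟨W, hWC, (hphi W hWC).mpr h1, h2⟩
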